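/- arXiv:1107.4680 — 5 statements merged into one kernel-verified Lean document; each statement's English description precedes it below -/
import Mathlib

section
/- For each m ∈ ℕ, the intertwining identity (πz − ∂_{z̄})^m = e^{-Δ_z/(4π)} (πz)^m e^{Δ_z/(4π)} holds as operators on polynomials in z and z̄, where Δ_z = 4∂_{z̄}∂_z; similarly (π z̄ − ∂_z)^m = e^{-Δ_z/(4π)} (π z̄)^m e^{Δ_z/(4π)}. -/
open MvPolynomial Real

noncomputable section

/-- Polynomials in the two commuting variables `z` (index `0`) and `z̄` (index `1`). -/
abbrev P2 : Type := MvPolynomial (Fin 2) ℂ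

/-- Formal Wirtinger derivative `∂_z`. -/
noncomputable def Dz : Module.End ℂ P2 := (pderiv (0 : Fin 2)).toLinearMap

/-- Formal Wirtinger derivative `∂_z̄`. -/
noncomputable def Dzb : Module.End ℂ P2 := (pderiv (1 : Fin 2)).toLinearMap

/-- Multiplication by `z`. -/
noncomputable def mulZ : Module.End ℂ P2 := LinearMap.mulLeft ℂ (X 0)

/-- Multiplication by `z̄`. -/
noncomputable def mulZb : Module.End ℂ P2 := LinearMap.mulLeft ℂ (X 1)

/-- The Laplacian `Δ_z = 4 ∂_z̄ ∂_z`. -/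
noncomputable def Δz : Module.End ℂ P2 := (4 : ℂ) • (Dzb ∘ₗ Dz)

/-- `e^{cΔ_z}` applied to a polynomial: a finite sum since `Δ_z` is locally nilpotent. -/
noncomputable def expDelta (c : ℂ) (p : P2) : P2 :=
  ∑ l ∈ Finset.range (p.totalDegree + 1), (c ^ l / (l.factorial : ℂ)) • ((Δz ^ l) p)

/-- `Φ_{j,k}(z,z̄) = (π^j j!)^{-1/2} Σ_{l=0}^j C(j,l) (-π z̄)^{j-l} ∂_z^l ((π^k/k!)^{1/2} z^k)`. -/
noncomputable def PhiJK (j k : ℕ) : P2 :=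
  ((Real.sqrt (π ^ j * j.factorial) : ℂ))⁻¹ •
    ∑ l ∈ Finset.range (j + 1), (j.choose l : ℂ) •
      ((C (-(π : ℂ)) * X 1) ^ (j - l) *
        ((Dz ^ l) ((Real.sqrt (π ^ k / k.factorial) : ℂ) • (X 0) ^ k)))

end

lemma pd_deg (i : Fin 2) (p : P2) : (pderiv i p).totalDegree ≤ p.totalDegree - 1 := by
  conv_lhs => rw [p.as_sum]
  rw [map_sum]
  apply totalDegree_finsetSum_le
  intro m hm
  rw [pderiv_monomial]
  by_cases h : m i = 0
  · simp [h]
  · refine le_trans (totalDegree_monomial_le _ _) ?_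
    have h1 : Finsupp.single i 1 ≤ m := by
      rw [Finsupp.single_le_iff]; omega
    have h3 : m.sum (fun _ e => e)
        = (m - Finsupp.single i 1).sum (fun _ e => e) + 1 := by
      conv_lhs => rw [← tsub_add_cancel_of_le h1]
      rw [Finsupp.sum_add_index' (fun _ => rfl) (fun _ _ _ => rfl)]
      simp [Finsupp.sum_single_index]
    have h4 : m.sum (fun _ e => e) ≤ p.totalDegree := le_totalDegree hm
    have : ((m - Finsupp.single i 1).sum fun _ => id) = (m - Finsupp.single i 1).sum (fun _ e => e) := rfl
    omega

lemma pd_zero_of_deg0 (i : Fin 2) (p : P2) (h : p.totalDegree = 0) : pderiv i p = 0 := by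
  conv_lhs => rw [p.as_sum]
  rw [map_sum]
  apply Finset.sum_eq_zero
  intro m hm
  have := (totalDegree_eq_zero_iff _ p).mp h m hm i
  rw [pderiv_monomial, this, Nat.cast_zero, mul_zero, map_zero]

lemma deg_Δz (p : P2) : (Δz p).totalDegree ≤ p.totalDegree - 1 := by
  show ((4:ℂ) • (Dzb ∘ₗ Dz) p).totalDegree ≤ _
  refine le_trans (totalDegree_smul_le _ _) ?_
  show ((pderiv 1 (pderiv 0 p)).totalDegree) ≤ _
  refine le_trans (pd_deg _ _) ?_
  have := pd_deg 0 p
  omega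

lemma Δz_zero_of_deg0 (p : P2) (h : p.totalDegree = 0) : Δz p = 0 := by
  show (4:ℂ) • (Dzb ∘ₗ Dz) p = 0
  have : pderiv (0 : Fin 2) p = 0 := pd_zero_of_deg0 _ _ h
  simp [Dzb, Dz, this]

lemma nilp : ∀ (l : ℕ) (p : P2), p.totalDegree < l → (Δz ^ l) p = 0 := by
  intro l
  induction l with
  | zero => intro p h; omega
  | succ n ih =>
    intro p h
    rw [pow_succ, Module.End.mul_apply]
    by_cases h0 : p.totalDegree = 0
    · rw [Δz_zero_of_deg0 p h0, map_zero]
    · exact ih _ (by have := deg_Δz p; omega)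

lemma deg_pow : ∀ (l : ℕ) (p : P2), ((Δz ^ l) p).totalDegree ≤ p.totalDegree := by
  intro l
  induction l with
  | zero => simp
  | succ n ih =>
    intro p
    rw [pow_succ, Module.End.mul_apply]
    exact le_trans (ih (Δz p)) (le_trans (deg_Δz p) (by omega))

open Finset Polynomial in
noncomputable def fpoly (c : ℂ) (N : ℕ) : Polynomial ℂ :=
  ∑ l ∈ range N, Polynomial.C (c ^ l / (l.factorial : ℂ)) * Polynomial.X ^ l

open Finset in
lemma fpoly_coeff (c : ℂ) (N i : ℕ) :
    (fpoly c N).coeff i = if i < N then c ^ i / (i.factorial : ℂ) else 0 := by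
  rw [fpoly, Polynomial.finset_sum_coeff]
  simp only [Polynomial.coeff_C_mul, Polynomial.coeff_X_pow]
  by_cases h : i < N
  · rw [if_pos h, Finset.sum_eq_single i]
    · simp
    · intro b _ hb; simp [Ne.symm hb]
    · intro hc; exact absurd (Finset.mem_range.mpr h) hc
  · rw [if_neg h]
    apply Finset.sum_eq_zero
    intro l hl
    rw [Finset.mem_range] at hl
    rw [if_neg (by omega), mul_zero]

open Finset in
lemma aeval_apply (g : Polynomial ℂ) (p : P2) :
    (Polynomial.aeval Δz g) p = ∑ i ∈ range (p.totalDegree + 1), g.coeff i • (Δz ^ i) p := by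
  set M := max (g.natDegree + 1) (p.totalDegree + 1) with hM
  have h1 : g.natDegree < M := by omega
  rw [Polynomial.aeval_eq_sum_range' h1]
  rw [LinearMap.sum_apply]
  simp only [LinearMap.smul_apply]
  symm
  apply Finset.sum_subset
  · apply Finset.range_subset_range.mpr; omega
  · intro i _ hi
    rw [Finset.mem_range, not_lt] at hi
    rw [nilp i p (by omega), smul_zero]

open Finset in
lemma expDelta_eq_sum (c : ℂ) (p : P2) {N : ℕ} (h : p.totalDegree < N) :
    expDelta c p = ∑ l ∈ range N, (c ^ l / (l.factorial : ℂ)) • (Δz ^ l) p := by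
  rw [expDelta]
  apply Finset.sum_subset
  · apply Finset.range_subset_range.mpr; omega
  · intro i _ hi
    rw [Finset.mem_range, not_lt] at hi
    rw [nilp i p (by omega), smul_zero]

lemma expDelta_eq_aeval (c : ℂ) (p : P2) {N : ℕ} (h : p.totalDegree < N) :
    expDelta c p = (Polynomial.aeval Δz (fpoly c N)) p := by
  rw [aeval_apply, expDelta]
  apply Finset.sum_congr rfl
  intro i hi
  rw [Finset.mem_range] at hi
  rw [fpoly_coeff, if_pos (by omega)]

open Finset in
lemma deg_expDelta (c : ℂ) (p : P2) : (expDelta c p).totalDegree ≤ p.totalDegree := by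
  rw [expDelta]
  apply totalDegree_finsetSum_le
  intro i _
  exact le_trans (totalDegree_smul_le _ _) (deg_pow i p)

open Finset in
lemma conv_zero (c : ℂ) {i : ℕ} (hi : i ≠ 0) :
    ∑ k ∈ range (i + 1), ((-c) ^ k / (k.factorial : ℂ)) * (c ^ (i - k) / ((i - k).factorial : ℂ)) = 0 := by
  have key : ∀ k ∈ range (i + 1),
      ((-c) ^ k / (k.factorial : ℂ)) * (c ^ (i - k) / ((i - k).factorial : ℂ))
      = ((-c) ^ k * c ^ (i - k) * (i.choose k : ℂ)) / (i.factorial : ℂ) := by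
    intro k hk
    rw [Finset.mem_range] at hk
    have hk' : k ≤ i := by omega
    rw [Nat.cast_choose ℂ hk']
    have h1 : (k.factorial : ℂ) ≠ 0 := Nat.cast_ne_zero.mpr (Nat.factorial_ne_zero k)
    have h2 : ((i - k).factorial : ℂ) ≠ 0 := Nat.cast_ne_zero.mpr (Nat.factorial_ne_zero _)
    have h3 : (i.factorial : ℂ) ≠ 0 := Nat.cast_ne_zero.mpr (Nat.factorial_ne_zero i)
    field_simp
  rw [Finset.sum_congr rfl key, ← Finset.sum_div, ← Commute.add_pow (Commute.all _ _)]
  simp [hi]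

open Finset in
lemma exp_cancel (c : ℂ) (p : P2) : expDelta (-c) (expDelta c p) = p := by
  set N := p.totalDegree + 1 with hN
  have h1 : p.totalDegree < N := by omega
  have h2 : (expDelta c p).totalDegree < N := by
    have := deg_expDelta c p; omega
  rw [expDelta_eq_aeval (-c) _ h2, expDelta_eq_aeval c p h1, ← Module.End.mul_apply, ← map_mul,
    aeval_apply]
  have hcoeff : ∀ i ∈ range (p.totalDegree + 1),
      (fpoly (-c) N * fpoly c N).coeff i • (Δz ^ i) p = (if i = 0 then (1:ℂ) else 0) • (Δz ^ i) p := by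
    intro i hi
    rw [Finset.mem_range] at hi
    congr 1
    rw [Polynomial.coeff_mul, Finset.Nat.sum_antidiagonal_eq_sum_range_succ_mk]
    by_cases h0 : i = 0
    · subst h0; simp [fpoly_coeff, hN]
    · rw [if_neg h0]
      have : ∀ k ∈ range (i+1), (fpoly (-c) N).coeff k * (fpoly c N).coeff (i - k)
          = ((-c) ^ k / (k.factorial : ℂ)) * (c ^ (i - k) / ((i - k).factorial : ℂ)) := by
        intro k hk
        rw [Finset.mem_range] at hk
        rw [fpoly_coeff, fpoly_coeff, if_pos (by omega), if_pos (by omega)]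
      rw [Finset.sum_congr rfl this, conv_zero c h0]
  rw [Finset.sum_congr rfl hcoeff]
  have : ∀ i ∈ range (p.totalDegree + 1), (if i = 0 then (1:ℂ) else 0) • (Δz ^ i) p
      = if i = 0 then p else 0 := by
    intro i _
    by_cases h : i = 0 <;> simp [h]
  rw [Finset.sum_congr rfl this, Finset.sum_ite_eq' (range (p.totalDegree + 1)) 0]
  simp

lemma pderiv_comm' (i j : Fin 2) (p : P2) :
    pderiv i (pderiv j p) = pderiv j (pderiv i p) := by
  induction p using MvPolynomial.induction_on' with
  | monomial m a =>
    simp only [pderiv_monomial]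
    by_cases hij : i = j
    · subst hij; rfl
    · have h1 : ((m - Finsupp.single j 1 : Fin 2 →₀ ℕ)) i = m i := by
        rw [Finsupp.tsub_apply, Finsupp.single_apply, if_neg (Ne.symm hij), Nat.sub_zero]
      have h2 : ((m - Finsupp.single i 1 : Fin 2 →₀ ℕ)) j = m j := by
        rw [Finsupp.tsub_apply, Finsupp.single_apply, if_neg hij, Nat.sub_zero]
      rw [h1, h2, tsub_right_comm]
      congr 1
      ring
  | add p q hp hq => simp [map_add, hp, hq]

lemma Dzb_Δz (p : P2) : Dzb (Δz p) = Δz (Dzb p) := by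
  simp only [Δz, Dzb, Dz, LinearMap.smul_apply, map_smul, LinearMap.comp_apply,
    Derivation.coeFn_coe]
  rw [pderiv_comm' 1 0 p]

lemma Dz_Δz (p : P2) : Dz (Δz p) = Δz (Dz p) := by
  simp only [Δz, Dzb, Dz, LinearMap.smul_apply, map_smul, LinearMap.comp_apply,
    Derivation.coeFn_coe]
  rw [pderiv_comm' 0 1 (pderiv 0 p)]

lemma comm1 (q : P2) : Δz (X 0 * q) = X 0 * Δz q + (4:ℂ) • Dzb q := by
  show (4:ℂ) • (Dzb ∘ₗ Dz) (X 0 * q) = X 0 * ((4:ℂ) • (Dzb ∘ₗ Dz) q) + (4:ℂ) • Dzb q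
  have h1 : (Dzb ∘ₗ Dz) (X 0 * q) = Dzb q + X 0 * (Dzb ∘ₗ Dz) q := by
    show pderiv 1 (pderiv 0 (X 0 * q)) = pderiv 1 q + X 0 * pderiv 1 (pderiv 0 q)
    rw [pderiv_mul, pderiv_X_self, one_mul, map_add, pderiv_mul, pderiv_X_of_ne (by decide)]
    ring
  rw [h1, smul_add, mul_smul_comm]
  exact add_comm _ _

lemma comm1b (q : P2) : Δz (X 1 * q) = X 1 * Δz q + (4:ℂ) • Dz q := by
  show (4:ℂ) • (Dzb ∘ₗ Dz) (X 1 * q) = X 1 * ((4:ℂ) • (Dzb ∘ₗ Dz) q) + (4:ℂ) • Dz q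
  have h1 : (Dzb ∘ₗ Dz) (X 1 * q) = Dz q + X 1 * (Dzb ∘ₗ Dz) q := by
    show pderiv 1 (pderiv 0 (X 1 * q)) = pderiv 0 q + X 1 * pderiv 1 (pderiv 0 q)
    rw [pderiv_mul, pderiv_X_of_ne (by decide), zero_mul, zero_add, pderiv_mul, pderiv_X_self, one_mul]
  rw [h1, smul_add, mul_smul_comm]
  exact add_comm _ _

lemma comm_pow (l : ℕ) : ∀ q : P2, (Δz ^ (l+1)) (X 0 * q)
    = X 0 * (Δz ^ (l+1)) q + ((4 * ((l:ℂ)+1))) • Dzb ((Δz ^ l) q) := by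
  induction l with
  | zero =>
    intro q
    simp only [zero_add, pow_one, pow_zero, Module.End.one_apply, Nat.cast_zero]
    rw [comm1 q]
    norm_num
  | succ n ih =>
    intro q
    have step : (Δz ^ (n+2)) (X 0 * q) = Δz ((Δz ^ (n+1)) (X 0 * q)) := by
      rw [← Module.End.mul_apply, ← pow_succ']
    have hΔ : Δz ((Δz ^ (n+1)) q) = (Δz ^ (n+2)) q := by
      rw [← Module.End.mul_apply, ← pow_succ']
    have hΔ2 : Δz ((Δz ^ n) q) = (Δz ^ (n+1)) q := by
      rw [← Module.End.mul_apply, ← pow_succ']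
    rw [step, ih q, map_add, comm1, map_smul, ← Dzb_Δz, hΔ, hΔ2, add_assoc, ← add_smul]
    have hsc : (4 + 4 * ((n:ℂ) + 1)) = 4 * ((((n:ℕ)+1 : ℕ) : ℂ) + 1) := by push_cast; ring
    rw [hsc]

lemma comm_powb (l : ℕ) : ∀ q : P2, (Δz ^ (l+1)) (X 1 * q)
    = X 1 * (Δz ^ (l+1)) q + ((4 * ((l:ℂ)+1))) • Dz ((Δz ^ l) q) := by
  induction l with
  | zero =>
    intro q
    simp only [zero_add, pow_one, pow_zero, Module.End.one_apply, Nat.cast_zero]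
    rw [comm1b q]
    norm_num
  | succ n ih =>
    intro q
    have step : (Δz ^ (n+2)) (X 1 * q) = Δz ((Δz ^ (n+1)) (X 1 * q)) := by
      rw [← Module.End.mul_apply, ← pow_succ']
    have hΔ : Δz ((Δz ^ (n+1)) q) = (Δz ^ (n+2)) q := by
      rw [← Module.End.mul_apply, ← pow_succ']
    have hΔ2 : Δz ((Δz ^ n) q) = (Δz ^ (n+1)) q := by
      rw [← Module.End.mul_apply, ← pow_succ']
    rw [step, ih q, map_add, comm1b, map_smul, ← Dz_Δz, hΔ, hΔ2, add_assoc, ← add_smul]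
    have hsc : (4 + 4 * ((n:ℂ) + 1)) = 4 * ((((n:ℕ)+1 : ℕ) : ℂ) + 1) := by push_cast; ring
    rw [hsc]

open Finset in
lemma step_gen (v : Fin 2) (D : Module.End ℂ P2)
    (hcomm : ∀ (l : ℕ) (q : P2), (Δz ^ (l+1)) (X v * q)
      = X v * (Δz ^ (l+1)) q + (4 * ((l:ℂ)+1)) • D ((Δz ^ l) q))
    (q : P2) :
    expDelta (-(4 * (π:ℂ))⁻¹) ((π:ℂ) • (X v * q))
      = (π:ℂ) • (X v * expDelta (-(4 * (π:ℂ))⁻¹) q) - D (expDelta (-(4 * (π:ℂ))⁻¹) q) := by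
  have hπ : (π:ℂ) ≠ 0 := Complex.ofReal_ne_zero.mpr Real.pi_ne_zero
  set c : ℂ := (4 * (π:ℂ))⁻¹ with hc
  set M : ℕ := q.totalDegree + 1 with hM
  set N : ℕ := M + 1 with hN
  have hdeg : ((π:ℂ) • (X v * q)).totalDegree < N := by
    refine lt_of_le_of_lt (totalDegree_smul_le _ _) ?_
    refine lt_of_le_of_lt (totalDegree_mul _ _) ?_
    have : (X v : P2).totalDegree ≤ 1 := le_of_eq (totalDegree_X v)
    omega
  have hdegq : q.totalDegree < M := by omega
  have hdegq' : q.totalDegree < N := by omega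
  rw [expDelta_eq_sum (-c) _ hdeg]
  have h1 : ∀ l, ((-c) ^ l / (l.factorial : ℂ)) • (Δz ^ l) ((π:ℂ) • (X v * q))
      = (π:ℂ) • (((-c) ^ l / (l.factorial : ℂ)) • (Δz ^ l) (X v * q)) := by
    intro l
    rw [map_smul, smul_comm]
  rw [Finset.sum_congr rfl (fun l _ => h1 l), ← Finset.smul_sum]
  rw [Finset.sum_range_succ']
  have h2 : ∀ i, ((-c) ^ (i+1) / ((i+1).factorial : ℂ)) • (Δz ^ (i+1)) (X v * q)
      = ((-c) ^ (i+1) / ((i+1).factorial : ℂ)) • (X v * (Δz ^ (i+1)) q)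
        + (-(π:ℂ)⁻¹ * ((-c) ^ i / (i.factorial : ℂ))) • D ((Δz ^ i) q) := by
    intro i
    rw [hcomm i q, smul_add, smul_smul]
    congr 2
    rw [Nat.factorial_succ]
    push_cast
    have hfac : ((i.factorial : ℂ)) ≠ 0 := Nat.cast_ne_zero.mpr (Nat.factorial_ne_zero i)
    have hi1 : ((i:ℂ) + 1) ≠ 0 := by
      have h := Nat.cast_ne_zero (R := ℂ) |>.mpr (Nat.succ_ne_zero i)
      push_cast at h
      exact h
    rw [hc]
    field_simp
    ring_nf
    rw [mul_inv_cancel₀ hπ, one_mul]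
  rw [Finset.sum_congr rfl (fun i _ => h2 i), Finset.sum_add_distrib]
  have hT1 : (∑ i ∈ range M, ((-c) ^ (i+1) / ((i+1).factorial : ℂ)) • (X v * (Δz ^ (i+1)) q))
      + ((-c) ^ 0 / ((0).factorial : ℂ)) • (Δz ^ 0) (X v * q)
      = X v * expDelta (-c) q := by
    have : ((-c) ^ 0 / ((0).factorial : ℂ)) • (Δz ^ 0) (X v * q)
        = ((-c) ^ 0 / ((0).factorial : ℂ)) • (X v * (Δz ^ 0) q) := by
      simp
    rw [this, ← Finset.sum_range_succ' (fun l => ((-c) ^ l / (l.factorial : ℂ)) • (X v * (Δz ^ l) q)) M]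
    rw [expDelta_eq_sum (-c) q hdegq', Finset.mul_sum]
    exact Finset.sum_congr rfl fun l _ => (mul_smul_comm _ _ _).symm
  have hT2 : (∑ i ∈ range M, (-(π:ℂ)⁻¹ * ((-c) ^ i / (i.factorial : ℂ))) • D ((Δz ^ i) q))
      = (-(π:ℂ)⁻¹) • D (expDelta (-c) q) := by
    rw [expDelta_eq_sum (-c) q hdegq, map_sum, Finset.smul_sum]
    exact Finset.sum_congr rfl fun i _ => by rw [map_smul, smul_smul]
  rw [add_right_comm, hT1, hT2, smul_add, smul_smul]
  rw [show (π:ℂ) * -(π:ℂ)⁻¹ = -1 by field_simp]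
  rw [neg_one_smul, ← sub_eq_add_neg]

lemma main_gen (v : Fin 2) (D : Module.End ℂ P2)
    (hcomm : ∀ (l : ℕ) (q : P2), (Δz ^ (l+1)) (X v * q)
      = X v * (Δz ^ (l+1)) q + (4 * ((l:ℂ)+1)) • D ((Δz ^ l) q))
    (B : Module.End ℂ P2) (hB : B = LinearMap.mulLeft ℂ (X v)) :
    ∀ (m : ℕ) (p : P2),
      ((((π:ℂ) • B - D) ^ m) p)
        = expDelta (-(4 * (π:ℂ))⁻¹)
            ((((π:ℂ) • B) ^ m) (expDelta ((4 * (π:ℂ))⁻¹) p)) := by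
  intro m
  induction m with
  | zero =>
    intro p
    simp only [pow_zero, Module.End.one_apply]
    exact (exp_cancel _ p).symm
  | succ n ih =>
    intro p
    rw [pow_succ', Module.End.mul_apply, ih p, pow_succ', Module.End.mul_apply]
    set r : P2 := (((π:ℂ) • B) ^ n) (expDelta ((4 * (π:ℂ))⁻¹) p) with hr
    have hBr : ((π:ℂ) • B) r = (π:ℂ) • (X v * r) := by
      rw [LinearMap.smul_apply, hB, LinearMap.mulLeft_apply]
    rw [hBr, step_gen v D hcomm r, LinearMap.sub_apply, LinearMap.smul_apply, hB,
      LinearMap.mulLeft_apply]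

/-- `(πz - ∂_z̄)^m = e^{-Δ_z/(4π)} (πz)^m e^{Δ_z/(4π)}` and
`(πz̄ - ∂_z)^m = e^{-Δ_z/(4π)} (πz̄)^m e^{Δ_z/(4π)}` as operators on `ℂ[z,z̄]`. -/
theorem intertwining_identity (m : ℕ) :
    (∀ p : P2, ((((π : ℂ) • mulZ - Dzb) ^ m) p)
        = expDelta (-(4 * (π : ℂ))⁻¹) (((((π : ℂ) • mulZ) ^ m)) (expDelta ((4 * (π : ℂ))⁻¹) p))) ∧
    (∀ p : P2, ((((π : ℂ) • mulZb - Dz) ^ m) p)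
        = expDelta (-(4 * (π : ℂ))⁻¹) (((((π : ℂ) • mulZb) ^ m)) (expDelta ((4 * (π : ℂ))⁻¹) p))) := by
  constructor
  · intro p
    exact main_gen 0 Dzb comm_pow mulZ rfl m p
  · intro p
    exact main_gen 1 Dz comm_powb mulZb rfl m p
end

section
/- Define Φ_k(z) = (π^k/k!)^{1/2} z^k and Φ_{j,k}(z, z̄) = (π^j j!)^{-1/2} Σ_{l=0}^{j} C(j,l) (−π z̄)^{j−l} ∂_z^l Φ_k(z). Then Φ_{j,k}(z, z̄) = e^{-Δ_z/(4π)} ( Φ_j(−z̄) Φ_k(z) ), where e^{-Δ_z/(4π)} = Σ_{l≥0} (−1)^l (4π)^{-l} Δ_z^l / l! (a finite sum on polynomials) and Δ_z = 4∂_{z̄}∂_z. -/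
open MvPolynomial Real

/-- `Φ_k(z) = (π^k/k!)^{1/2} z^k` as a polynomial in `z`. -/
noncomputable def PhiK (k : ℕ) : P2 :=
  (Real.sqrt (π ^ k / k.factorial) : ℂ) • (X 0) ^ k

/-- `Φ_j(-z̄)`: the polynomial `Φ_j` evaluated at `-z̄`. -/
noncomputable def PhiKbarNeg (j : ℕ) : P2 :=
  (Real.sqrt (π ^ j / j.factorial) : ℂ) • (-(X 1 : P2)) ^ j

lemma Dz_pow_X0_pow (l n : ℕ) :
    (Dz ^ l) ((X 0 : P2) ^ n) = (n.descFactorial l : ℂ) • (X 0 : P2) ^ (n - l) := by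
  induction l with
  | zero => simp
  | succ l ih =>
    rw [pow_succ', Module.End.mul_apply, ih, map_smul]
    have h : Dz ((X 0 : P2) ^ (n - l)) = ((n - l : ℕ) : ℂ) • (X 0 : P2) ^ (n - l - 1) := by
      show pderiv (0:Fin 2) _ = _
      rw [pderiv_pow, pderiv_X_self, mul_one]
      simp [smul_eq_C_mul]
    rw [h, smul_smul, Nat.descFactorial_succ, Nat.sub_sub]
    push_cast
    ring_nf

lemma delta_mono (a b : ℕ) : Δz ((X 1 : P2) ^ a * (X 0 : P2) ^ b) =
    ((4 : ℂ) * a * b) • ((X 1 : P2) ^ (a-1) * (X 0 : P2) ^ (b-1)) := by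
  have h0 : pderiv (0:Fin 2) ((X 1 : P2) ^ a) = 0 := by
    rw [pderiv_pow, pderiv_X_of_ne (by decide : (1:Fin 2) ≠ 0)]; ring
  have h1 : ∀ m : ℕ, pderiv (1:Fin 2) ((X 0 : P2) ^ m) = 0 := fun m => by
    rw [pderiv_pow, pderiv_X_of_ne (by decide : (0:Fin 2) ≠ 1)]; ring
  have hc : pderiv (1:Fin 2) ((b : P2)) = 0 := by
    rw [← map_natCast (C : ℂ →+* P2), pderiv_C]
  show (4:ℂ) • (pderiv 1 (pderiv 0 _)) = _
  rw [pderiv_mul, h0, zero_mul, zero_add, pderiv_pow (i := (0:Fin 2)), pderiv_X_self, mul_one,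
    pderiv_mul, pderiv_mul, hc, h1]
  simp only [zero_mul, mul_zero, zero_add, add_zero, pderiv_pow, pderiv_X_self, mul_one]
  simp only [smul_eq_C_mul, map_mul, map_natCast, map_ofNat]
  ring

lemma delta_pow (l a b : ℕ) : (Δz ^ l) ((X 1 : P2) ^ a * (X 0 : P2) ^ b) =
    ((4:ℂ)^l * (a.descFactorial l) * (b.descFactorial l)) • ((X 1 : P2) ^ (a-l) * (X 0 : P2) ^ (b-l)) := by
  induction l with
  | zero => simp
  | succ l ih =>
    rw [pow_succ', Module.End.mul_apply, ih, map_smul, delta_mono, smul_smul,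
      Nat.sub_sub, Nat.sub_sub]
    congr 1
    rw [Nat.descFactorial_succ, Nat.descFactorial_succ, Nat.cast_mul, Nat.cast_mul, pow_succ]
    ring


/-- `Φ_{j,k}(z,z̄) = e^{-Δ_z/(4π)} (Φ_j(-z̄) Φ_k(z))`. -/
theorem phiJK_eq_expDelta (j k : ℕ) :
    PhiJK j k = expDelta (-(4 * (π : ℂ))⁻¹) (PhiKbarNeg j * PhiK k) := by
  set cj : ℂ := (Real.sqrt (π ^ j / j.factorial) : ℂ) with hcj_def
  set ck : ℂ := (Real.sqrt (π ^ k / k.factorial) : ℂ) with hck_def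
  set S : ℂ := (Real.sqrt (π ^ j * j.factorial) : ℂ) with hS_def
  set A : ℂ := (-1:ℂ)^j * (cj * ck) with hA_def
  have hπ0 : (π:ℂ) ≠ 0 := by
    simp only [ne_eq, Complex.ofReal_eq_zero]; exact Real.pi_ne_zero
  have hS0 : S ≠ 0 := by
    simp only [hS_def, ne_eq, Complex.ofReal_eq_zero]
    positivity
  have hcj0 : cj ≠ 0 := by
    simp only [hcj_def, ne_eq, Complex.ofReal_eq_zero]
    positivity
  have hck0 : ck ≠ 0 := by
    simp only [hck_def, ne_eq, Complex.ofReal_eq_zero]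
    positivity
  have hA0 : A ≠ 0 := by
    simp only [hA_def]
    exact mul_ne_zero (pow_ne_zero _ (by norm_num)) (mul_ne_zero hcj0 hck0)
  have hScj : S * cj = (π:ℂ)^j := by
    rw [hS_def, hcj_def, ← Complex.ofReal_mul]
    have hr : Real.sqrt (π ^ j * j.factorial) * Real.sqrt (π ^ j / j.factorial) = π ^ j := by
      rw [← Real.sqrt_mul (by positivity)]
      have : (π ^ j * (j.factorial:ℝ)) * (π ^ j / (j.factorial:ℝ)) = (π ^ j) ^ 2 := by
        field_simp
      rw [this, Real.sqrt_sq (by positivity)]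
    rw [hr]
    push_cast
    ring
  -- product as scalar times monomial
  have hneg : (-(X 1 : P2)) ^ j = ((-1:ℂ)^j) • (X 1 : P2) ^ j := by
    rw [neg_pow, smul_eq_C_mul, map_pow, map_neg, map_one]
  have hprod : PhiKbarNeg j * PhiK k = A • ((X 1 : P2) ^ j * (X 0 : P2) ^ k) := by
    rw [PhiKbarNeg, PhiK, hneg, hA_def]
    rw [smul_mul_assoc, mul_smul_comm, smul_smul, smul_mul_assoc, smul_smul]
    congr 1
    ring
  have htd : (A • ((X 1 : P2) ^ j * (X 0 : P2) ^ k)).totalDegree = j + k := by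
    have hm : A • ((X 1 : P2) ^ j * (X 0 : P2) ^ k) =
        monomial (Finsupp.single 1 j + Finsupp.single 0 k) A := by
      rw [X_pow_eq_monomial, X_pow_eq_monomial, monomial_mul, mul_one, smul_monomial,
        smul_eq_mul, mul_one]
    rw [hm, totalDegree_monomial _ hA0]
    rw [Finsupp.sum_add_index (by simp) (by simp)]
    simp
  -- RHS as a sum
  rw [hprod, expDelta, htd]
  have hterm : ∀ l : ℕ,
      ((-(4 * (π : ℂ))⁻¹) ^ l / (l.factorial : ℂ)) • ((Δz ^ l) (A • ((X 1 : P2) ^ j * (X 0 : P2) ^ k))) =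
      ((-(4 * (π : ℂ))⁻¹) ^ l / (l.factorial : ℂ) * (A * ((4:ℂ)^l * (j.descFactorial l) * (k.descFactorial l)))) •
        ((X 1 : P2) ^ (j-l) * (X 0 : P2) ^ (k-l)) := by
    intro l
    rw [map_smul, delta_pow, smul_smul, smul_smul, mul_assoc]
  simp only [hterm]
  -- shrink the sum to range (j+1)
  rw [← Finset.sum_subset (Finset.range_subset_range.mpr (by omega : j + 1 ≤ j + k + 1))
    (fun l _ hl1 => by
      have hjl : j < l := by simpa using hl1
      simp [Nat.descFactorial_eq_zero_iff_lt.mpr hjl])]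
  -- LHS
  rw [PhiJK, Finset.smul_sum]
  refine Finset.sum_congr rfl (fun l hl => ?_)
  have hlj : l ≤ j := Nat.lt_succ_iff.mp (Finset.mem_range.mp hl)
  rw [map_smul, Dz_pow_X0_pow, ← hS_def, ← hck_def]
  simp only [← smul_eq_C_mul, smul_pow, smul_smul, mul_smul_comm, smul_mul_assoc, mul_assoc]
  congr 1
  obtain ⟨m, rfl⟩ := Nat.exists_eq_add_of_le hlj
  simp only [Nat.add_sub_cancel_left]
  have hcj2 : cj = (π:ℂ)^(l+m) / S := by rw [eq_div_iff hS0, mul_comm]; exact hScj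
  rw [hA_def, hcj2, Nat.descFactorial_eq_factorial_mul_choose (l+m) l,
    Nat.descFactorial_eq_factorial_mul_choose k l, Nat.cast_mul, Nat.cast_mul]
  have hfac : ((l.factorial : ℂ)) ≠ 0 := by exact_mod_cast Nat.factorial_ne_zero l
  field_simp
  ring_nf
  have h1 : (π:ℂ)^l * (π:ℂ)⁻¹^l = 1 := by rw [← mul_pow, mul_inv_cancel₀ hπ0, one_pow]
  have h2 : (-1:ℂ)^l * (-1/4)^l * 4^l = 1 := by rw [← mul_pow, ← mul_pow]; norm_num
  linear_combination (-(((l + m).choose l : ℂ) * (k.choose l : ℂ) * (π:ℂ)^m * (-1)^m)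
    * ((-1:ℂ)^l * (-1/4)^l * 4^l)) * h1
    - (((l + m).choose l : ℂ) * (k.choose l : ℂ) * (π:ℂ)^m * (-1)^m) * h2
end

section
/- The polyanalytic basis functions Φ_{j,k} satisfy the raising relations (√π z − (1/√π)∂_{z̄}) Φ_{j,k} = √(k+1) Φ_{j,k+1} and (√π z̄ − (1/√π)∂_z) Φ_{j,k} = −√(j+1) Φ_{j+1,k}. -/
open MvPolynomial Real

noncomputable section PhiAux

/-- monomial `z̄^a z^b` -/
def Mn (a b : ℕ) : P2 := X 1 ^ a * X 0 ^ b

/-- coefficients of `Φ` (up to normalization) -/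
def cf (j k l : ℕ) : ℂ :=
  (j.choose l : ℂ) * (k.descFactorial l : ℂ) * (-(π : ℂ)) ^ (j - l)

/-- unnormalized `Φ` -/
def Tp (j k : ℕ) : P2 := ∑ l ∈ Finset.range (j + 1), cf j k l • Mn (j - l) (k - l)

lemma DzMn (a b : ℕ) : Dz (Mn a b) = (b : ℂ) • Mn a (b - 1) := by
  have h10 : (1 : Fin 2) ≠ 0 := by decide
  simp only [Dz, Mn, LinearMap.coe_mk, Derivation.coeFn_coe, pderiv_mul, pderiv_pow,
    pderiv_X_self, pderiv_X_of_ne h10, smul_eq_C_mul, map_natCast]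
  ring

lemma DzbMn (a b : ℕ) : Dzb (Mn a b) = (a : ℂ) • Mn (a - 1) b := by
  have h01 : (0 : Fin 2) ≠ 1 := by decide
  simp only [Dzb, Mn, LinearMap.coe_mk, Derivation.coeFn_coe, pderiv_mul, pderiv_pow,
    pderiv_X_self, pderiv_X_of_ne h01, smul_eq_C_mul, map_natCast]
  ring

lemma Dz_pow_X (l k : ℕ) :
    (Dz ^ l) ((X 0 : P2) ^ k) = (k.descFactorial l : ℂ) • (X 0 : P2) ^ (k - l) := by
  induction l with
  | zero => simp
  | succ l ih =>
    rw [pow_succ', Module.End.mul_apply, ih, map_smul]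
    have : Dz ((X 0 : P2) ^ (k - l)) = ((k - l : ℕ) : ℂ) • (X 0 : P2) ^ (k - (l + 1)) := by
      have := DzMn 0 (k - l)
      simpa [Mn, Nat.sub_sub] using this
    rw [this, smul_smul, Nat.descFactorial_succ]
    push_cast
    ring_nf

lemma descAux (k l : ℕ) :
    (k + 1).descFactorial (l + 1) = k.descFactorial (l + 1) + (l + 1) * k.descFactorial l := by
  rw [Nat.succ_descFactorial_succ, Nat.descFactorial_succ]
  rcases le_or_gt l k with h | h
  · rw [← Nat.add_mul]
    congr 1
    omega
  · rw [Nat.descFactorial_eq_zero_iff_lt.2 h]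
    simp

lemma Phi_eq (j k : ℕ) :
    PhiJK j k = (((Real.sqrt (π ^ j * j.factorial) : ℂ))⁻¹ *
      (Real.sqrt (π ^ k / k.factorial) : ℂ)) • Tp j k := by
  rw [PhiJK, Tp, mul_smul]
  congr 1
  rw [Finset.smul_sum]
  refine Finset.sum_congr rfl fun l _ => ?_
  rw [map_smul, Dz_pow_X, cf, Mn, mul_pow, ← C_pow]
  simp only [smul_eq_C_mul, map_mul]
  ring

lemma key1 (j k : ℕ) :
    (π : ℂ) • ((X 0 : P2) * Tp j k) - Dzb (Tp j k) = (π : ℂ) • Tp j (k + 1) := by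
  have hc : ∀ l : ℕ, (j.choose (l + 1) : ℂ) * (l + 1) = (j.choose l : ℂ) * ((j - l : ℕ) : ℂ) := by
    intro l
    exact_mod_cast congrArg (Nat.cast (R := ℂ)) (Nat.choose_succ_right_eq j l)
  have he : ∀ l : ℕ, ((k + 1).descFactorial (l + 1) : ℂ)
      = (k.descFactorial (l + 1) : ℂ) + (l + 1) * (k.descFactorial l : ℂ) := by
    intro l
    exact_mod_cast congrArg (Nat.cast (R := ℂ)) (descAux k l)
  have hDzb : Dzb (Tp j k) = ∑ l ∈ Finset.range j,
      ((j.choose l : ℂ) * (k.descFactorial l : ℂ) * (-(π : ℂ)) ^ (j - l) * ((j - l : ℕ) : ℂ)) •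
        Mn (j - l - 1) (k - l) := by
    have : Dzb (Tp j k) = ∑ l ∈ Finset.range (j + 1),
        ((j.choose l : ℂ) * (k.descFactorial l : ℂ) * (-(π : ℂ)) ^ (j - l) * ((j - l : ℕ) : ℂ)) •
          Mn (j - l - 1) (k - l) := by
      rw [Tp, map_sum]
      refine Finset.sum_congr rfl fun l _ => ?_
      rw [map_smul, DzbMn, smul_smul, cf]
    rw [this, Finset.sum_range_succ]
    simp
  have hL : (π : ℂ) • ((X 0 : P2) * Tp j k) - (π : ℂ) • Tp j (k + 1)
      = ∑ l ∈ Finset.range (j + 1),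
        ((π : ℂ) • (cf j k l • Mn (j - l) ((k - l) + 1))
          - (π : ℂ) • (cf j (k + 1) l • Mn (j - l) (k + 1 - l))) := by
    rw [Tp, Tp, Finset.mul_sum, Finset.smul_sum, Finset.smul_sum, ← Finset.sum_sub_distrib]
    refine Finset.sum_congr rfl fun l _ => ?_
    rw [mul_smul_comm, show (X 0 : P2) * Mn (j - l) (k - l) = Mn (j - l) ((k - l) + 1) from by
      rw [Mn, Mn]; ring]
  have h : (π : ℂ) • ((X 0 : P2) * Tp j k) - (π : ℂ) • Tp j (k + 1) = Dzb (Tp j k) := by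
    rw [hL, hDzb, Finset.sum_range_succ']
    have h0 : (π : ℂ) • (cf j k 0 • Mn (j - 0) ((k - 0) + 1))
        - (π : ℂ) • (cf j (k + 1) 0 • Mn (j - 0) (k + 1 - 0)) = 0 := by
      simp [cf]
    rw [h0, add_zero]
    refine Finset.sum_congr rfl fun l hl => ?_
    have hlj : l < j := Finset.mem_range.mp hl
    have hmon : j - (l + 1) = j - l - 1 := by omega
    have hp : (-(π : ℂ)) ^ (j - l) = (-(π : ℂ)) * (-(π : ℂ)) ^ (j - (l + 1)) := by
      rw [← pow_succ']
      congr 1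
      omega
    have hk1 : k + 1 - (l + 1) = k - l := by omega
    rcases le_or_gt (l + 1) k with hlk | hlk
    · have hmon2 : (k - (l + 1)) + 1 = k - l := by omega
      rw [hmon, hmon2, hk1, smul_smul, smul_smul, ← sub_smul]
      congr 1
      rw [cf, cf, hp]
      linear_combination (-(π : ℂ) * (-(π : ℂ)) ^ (j - (l + 1)) * (j.choose (l + 1) : ℂ)) * he l
        + (-(π : ℂ) * (k.descFactorial l : ℂ) * (-(π : ℂ)) ^ (j - (l + 1))) * hc l
    · have hz : (k.descFactorial (l + 1) : ℂ) = 0 := by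
        norm_cast
        exact Nat.descFactorial_eq_zero_iff_lt.2 hlk
      have hcf : cf j k (l + 1) = 0 := by
        rw [cf, hz]
        ring
      rw [hcf, zero_smul, smul_zero, zero_sub, hmon, hk1, smul_smul, ← neg_smul]
      congr 1
      rw [cf, hp]
      linear_combination (-(π : ℂ) * (-(π : ℂ)) ^ (j - (l + 1)) * (j.choose (l + 1) : ℂ)) * he l
        + (-(π : ℂ) * (k.descFactorial l : ℂ) * (-(π : ℂ)) ^ (j - (l + 1))) * hc l
        + (-(π : ℂ) * (-(π : ℂ)) ^ (j - (l + 1)) * (j.choose (l + 1) : ℂ)) * hz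
  linear_combination h

lemma key2 (j k : ℕ) :
    Dz (Tp j k) - (π : ℂ) • ((X 1 : P2) * Tp j k) = Tp (j + 1) k := by
  have hDz : Dz (Tp j k) = ∑ l ∈ Finset.range (j + 1),
      ((j.choose l : ℂ) * (k.descFactorial (l + 1) : ℂ) * (-(π : ℂ)) ^ (j - l)) •
        Mn (j - l) (k - (l + 1)) := by
    rw [Tp, map_sum]
    refine Finset.sum_congr rfl fun l _ => ?_
    rw [map_smul, DzMn, smul_smul, cf]
    rw [show k - l - 1 = k - (l + 1) from by omega, Nat.descFactorial_succ]
    push_cast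
    ring_nf
  have hX1 : (π : ℂ) • ((X 1 : P2) * Tp j k) = -∑ l ∈ Finset.range (j + 1),
      ((j.choose l : ℂ) * (k.descFactorial l : ℂ) * (-(π : ℂ)) ^ (j + 1 - l)) •
        Mn (j + 1 - l) (k - l) := by
    rw [Tp, Finset.mul_sum, Finset.smul_sum, ← Finset.sum_neg_distrib]
    refine Finset.sum_congr rfl fun l hl => ?_
    have hl' : l ≤ j := Nat.lt_succ_iff.mp (Finset.mem_range.mp hl)
    have h1 : j + 1 - l = (j - l) + 1 := by omega
    rw [mul_smul_comm, smul_smul, cf, h1, ← neg_smul]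
    rw [show (X 1 : P2) * Mn (j - l) (k - l) = Mn (j - l + 1) (k - l) from by
      rw [Mn, Mn]; ring]
    congr 1
    ring
  have hext : ∑ l ∈ Finset.range j,
      ((j.choose (l + 1) : ℂ) * (k.descFactorial (l + 1) : ℂ) * (-(π : ℂ)) ^ (j + 1 - (l + 1))) •
        Mn (j + 1 - (l + 1)) (k - (l + 1))
      = ∑ l ∈ Finset.range (j + 1),
      ((j.choose (l + 1) : ℂ) * (k.descFactorial (l + 1) : ℂ) * (-(π : ℂ)) ^ (j + 1 - (l + 1))) •
        Mn (j + 1 - (l + 1)) (k - (l + 1)) := by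
    rw [Finset.sum_range_succ]
    simp [Nat.choose_succ_self]
  have hH : ∑ l ∈ Finset.range (j + 1),
      ((j.choose l : ℂ) * (k.descFactorial l : ℂ) * (-(π : ℂ)) ^ (j + 1 - l)) •
        Mn (j + 1 - l) (k - l)
      = ∑ l ∈ Finset.range (j + 1),
      ((j.choose (l + 1) : ℂ) * (k.descFactorial (l + 1) : ℂ) * (-(π : ℂ)) ^ (j + 1 - (l + 1))) •
        Mn (j + 1 - (l + 1)) (k - (l + 1))
      + ((j.choose 0 : ℂ) * (k.descFactorial 0 : ℂ) * (-(π : ℂ)) ^ (j + 1 - 0)) •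
        Mn (j + 1 - 0) (k - 0) := by
    rw [Finset.sum_range_succ', hext]
  have hT : Tp (j + 1) k = ∑ l ∈ Finset.range (j + 1),
      cf (j + 1) k (l + 1) • Mn (j + 1 - (l + 1)) (k - (l + 1))
      + cf (j + 1) k 0 • Mn (j + 1 - 0) (k - 0) := by
    rw [Tp, Finset.sum_range_succ']
  rw [hDz, hX1, sub_neg_eq_add, hH, ← add_assoc, ← Finset.sum_add_distrib, hT]
  congr 1
  · refine Finset.sum_congr rfl fun l hl => ?_
    rw [show j + 1 - (l + 1) = j - l from by omega, ← add_smul, cf,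
      show j + 1 - (l + 1) = j - l from by omega]
    congr 1
    push_cast [Nat.choose_succ_succ]
    ring
  · simp [cf]

end PhiAux

/-- Raising relations:
`(√π z - (1/√π)∂_z̄) Φ_{j,k} = √(k+1) Φ_{j,k+1}` and
`(√π z̄ - (1/√π)∂_z) Φ_{j,k} = -√(j+1) Φ_{j+1,k}`. -/
theorem phiJK_raising (j k : ℕ) :
    ((Real.sqrt π : ℂ) • mulZ - ((Real.sqrt π : ℂ))⁻¹ • Dzb) (PhiJK j k)
        = (Real.sqrt (k + 1) : ℂ) • PhiJK j (k + 1) ∧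
    ((Real.sqrt π : ℂ) • mulZb - ((Real.sqrt π : ℂ))⁻¹ • Dz) (PhiJK j k)
        = -((Real.sqrt (j + 1) : ℂ)) • PhiJK (j + 1) k := by
  have hπ : (0 : ℝ) < π := Real.pi_pos
  have hsπ : (Real.sqrt π : ℂ) ≠ 0 := by
    simp only [ne_eq, Complex.ofReal_eq_zero]
    positivity
  have hsq : (Real.sqrt π : ℂ) * (Real.sqrt π : ℂ) = (π : ℂ) := by
    rw [← Complex.ofReal_mul, Real.mul_self_sqrt hπ.le]
  have h2 : ((Real.sqrt π : ℂ))⁻¹ * (π : ℂ) = (Real.sqrt π : ℂ) := by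
    rw [inv_mul_eq_iff_eq_mul₀ hsπ, hsq]
  constructor
  · have hB : Real.sqrt (π ^ k / k.factorial) * Real.sqrt π
        = Real.sqrt ((k : ℝ) + 1) * Real.sqrt (π ^ (k + 1) / (k + 1).factorial) := by
      rw [← Real.sqrt_mul (by positivity), ← Real.sqrt_mul (by positivity)]
      congr 1
      have hf : ((k + 1).factorial : ℝ) = ((k : ℝ) + 1) * k.factorial := by
        push_cast [Nat.factorial_succ]
        ring
      rw [hf]
      have hk0 : (k.factorial : ℝ) ≠ 0 := by positivity
      field_simp
      ring
    have hBc : (Real.sqrt (π ^ k / k.factorial) : ℂ) * (Real.sqrt π : ℂ)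
        = (Real.sqrt ((k : ℝ) + 1) : ℂ) * (Real.sqrt (π ^ (k + 1) / (k + 1).factorial) : ℂ) := by
      exact_mod_cast congrArg Complex.ofReal hB
    have inner : (Real.sqrt π : ℂ) • ((X 0 : P2) * Tp j k)
        - ((Real.sqrt π : ℂ))⁻¹ • Dzb (Tp j k) = (Real.sqrt π : ℂ) • Tp j (k + 1) := by
      calc (Real.sqrt π : ℂ) • ((X 0 : P2) * Tp j k) - ((Real.sqrt π : ℂ))⁻¹ • Dzb (Tp j k)
          = ((Real.sqrt π : ℂ))⁻¹ • ((π : ℂ) • ((X 0 : P2) * Tp j k) - Dzb (Tp j k)) := by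
            rw [smul_sub, smul_smul, h2]
        _ = ((Real.sqrt π : ℂ))⁻¹ • ((π : ℂ) • Tp j (k + 1)) := by rw [key1 j k]
        _ = (Real.sqrt π : ℂ) • Tp j (k + 1) := by rw [smul_smul, h2]
    rw [LinearMap.sub_apply, LinearMap.smul_apply, LinearMap.smul_apply,
      Phi_eq j k, Phi_eq j (k + 1), map_smul, map_smul, mulZ, LinearMap.mulLeft_apply,
      smul_comm (Real.sqrt π : ℂ), smul_comm ((Real.sqrt π : ℂ))⁻¹, ← smul_sub, inner,
      smul_smul, smul_smul]
    congr 1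
    linear_combination (((Real.sqrt (π ^ j * j.factorial) : ℂ))⁻¹) * hBc
  · have hA0 : Real.sqrt (π ^ (j + 1) * (j + 1).factorial)
        = Real.sqrt ((j : ℝ) + 1) * Real.sqrt (π ^ j * j.factorial) * Real.sqrt π := by
      rw [mul_assoc, ← Real.sqrt_mul (by positivity), ← Real.sqrt_mul (by positivity)]
      congr 1
      push_cast [Nat.factorial_succ]
      ring
    have hA : (Real.sqrt (π ^ j * j.factorial))⁻¹ * (Real.sqrt π)⁻¹
        = Real.sqrt ((j : ℝ) + 1) * (Real.sqrt (π ^ (j + 1) * (j + 1).factorial))⁻¹ := by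
      rw [hA0]
      have h1 : Real.sqrt (π ^ j * j.factorial) ≠ 0 := by positivity
      have h2 : Real.sqrt π ≠ 0 := by positivity
      have h3 : Real.sqrt ((j : ℝ) + 1) ≠ 0 := by positivity
      field_simp
    have hAc : ((Real.sqrt (π ^ j * j.factorial) : ℂ))⁻¹ * ((Real.sqrt π : ℂ))⁻¹
        = (Real.sqrt ((j : ℝ) + 1) : ℂ) * ((Real.sqrt (π ^ (j + 1) * (j + 1).factorial) : ℂ))⁻¹ := by
      exact_mod_cast congrArg Complex.ofReal hA
    have inner : (Real.sqrt π : ℂ) • ((X 1 : P2) * Tp j k)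
        - ((Real.sqrt π : ℂ))⁻¹ • Dz (Tp j k)
        = (-((Real.sqrt π : ℂ))⁻¹) • Tp (j + 1) k := by
      calc (Real.sqrt π : ℂ) • ((X 1 : P2) * Tp j k) - ((Real.sqrt π : ℂ))⁻¹ • Dz (Tp j k)
          = ((Real.sqrt π : ℂ))⁻¹ • ((π : ℂ) • ((X 1 : P2) * Tp j k) - Dz (Tp j k)) := by
            rw [smul_sub, smul_smul, h2]
        _ = ((Real.sqrt π : ℂ))⁻¹ • (-(Dz (Tp j k) - (π : ℂ) • ((X 1 : P2) * Tp j k))) := by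
            rw [neg_sub]
        _ = (-((Real.sqrt π : ℂ))⁻¹) • Tp (j + 1) k := by
            rw [key2 j k, smul_neg, ← neg_smul]
    rw [LinearMap.sub_apply, LinearMap.smul_apply, LinearMap.smul_apply,
      Phi_eq j k, Phi_eq (j + 1) k, map_smul, map_smul, mulZb, LinearMap.mulLeft_apply,
      smul_comm (Real.sqrt π : ℂ), smul_comm ((Real.sqrt π : ℂ))⁻¹, ← smul_sub, inner,
      smul_smul, smul_smul]
    congr 1
    linear_combination (-(Real.sqrt (π ^ k / k.factorial) : ℂ)) * hAc
end

section
/- The polyanalytic basis functions Φ_{j,k} satisfy the lowering relations (1/√π) ∂_z Φ_{j,k} = √k · Φ_{j,k−1} and (1/√π) ∂_{z̄} Φ_{j,k} = −√j · Φ_{j−1,k} (with the convention Φ_{j,−1} = Φ_{−1,k} = 0). -/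
open MvPolynomial Real

noncomputable section

lemma dz_mul (p q : P2) : Dz (p * q) = Dz p * q + p * Dz q := pderiv_mul

lemma dzb_mul (p q : P2) : Dzb (p * q) = Dzb p * q + p * Dzb q := pderiv_mul

lemma dz_X_pow (n : ℕ) : Dz ((X 0 : P2)^n) = (n:ℂ) • X 0 ^ (n-1) := by
  simp [Dz, pderiv_pow, pderiv_X_self, smul_eq_C_mul]

lemma dzb_X_pow (n : ℕ) : Dzb ((X 0 : P2)^n) = 0 := by
  simp [Dzb, pderiv_pow, pderiv_X]

lemma dz_zb_pow (m : ℕ) : Dz ((C (-(π:ℂ)) * X 1)^m) = 0 := by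
  simp [Dz, pderiv_pow, pderiv_mul, pderiv_X, pderiv_C]

lemma dzb_zb_pow (m : ℕ) :
    Dzb ((C (-(π:ℂ)) * X 1)^m) = ((m : ℂ) * (-(π:ℂ))) • ((C (-(π:ℂ)) * X 1)^(m-1)) := by
  simp [Dzb, pderiv_pow, pderiv_mul, pderiv_X, pderiv_C, smul_eq_C_mul]
  ring

lemma dz_pow_X_pow (l k : ℕ) :
    (Dz ^ l) ((X 0 : P2)^k) = (k.descFactorial l : ℂ) • X 0 ^ (k - l) := by
  induction l with
  | zero => simp
  | succ n ih =>
    rw [pow_succ', Module.End.mul_apply, ih, map_smul, dz_X_pow, smul_smul]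
    congr 1
    push_cast [Nat.descFactorial_succ]; ring

noncomputable def Nsum (j k : ℕ) : P2 := ∑ l ∈ Finset.range (j+1), (j.choose l : ℂ) •
  ((C (-(π:ℂ)) * X 1)^(j-l) * ((k.descFactorial l : ℂ) • (X 0:P2) ^ (k - l)))

lemma phi_eq (j k : ℕ) : PhiJK j k = ((Real.sqrt (π ^ j * j.factorial) : ℂ))⁻¹ •
    ((Real.sqrt (π ^ k / k.factorial) : ℂ) • Nsum j k) := by
  have key : ∀ l, ((j.choose l : ℂ)) • ((C (-(π:ℂ)) * X 1) ^ (j - l) *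
        ((Dz ^ l) ((Real.sqrt (π ^ k / k.factorial) : ℂ) • (X 0:P2) ^ k)))
      = (Real.sqrt (π ^ k / k.factorial) : ℂ) • ((j.choose l : ℂ) •
        ((C (-(π:ℂ)) * X 1)^(j-l) * ((k.descFactorial l : ℂ) • (X 0:P2) ^ (k - l)))) := by
    intro l
    rw [map_smul, dz_pow_X_pow]
    simp only [smul_eq_C_mul]
    ring
  rw [PhiJK, Nsum]
  simp only [key, ← Finset.smul_sum]

lemma nat_desc (k l : ℕ) : k.descFactorial l * (k - l) = k * (k-1).descFactorial l := by
  cases k with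
  | zero => simp
  | succ m =>
    rw [mul_comm, ← Nat.descFactorial_succ, Nat.succ_descFactorial_succ]
    simp

lemma nat_choose (m l : ℕ) : (m + 1 - l) * (m+1).choose l = (m + 1) * m.choose l := by
  rw [mul_comm, ← Nat.choose_succ_right_eq, Nat.add_one_mul_choose_eq]

lemma dz_Nsum (j k : ℕ) : Dz (Nsum j k) = (k : ℂ) • Nsum j (k-1) := by
  rw [Nsum, Nsum, map_sum, Finset.smul_sum]
  refine Finset.sum_congr rfl fun l _ => ?_
  rw [map_smul, smul_comm ((k:ℂ))]
  congr 1
  rw [dz_mul, dz_zb_pow, zero_mul, zero_add, map_smul, dz_X_pow,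
    show k - l - 1 = k - 1 - l by omega]
  simp only [mul_smul_comm, smul_smul]
  congr 1
  exact_mod_cast congrArg (Nat.cast (R := ℂ)) (nat_desc k l)

lemma dzb_Nsum (j k : ℕ) : Dzb (Nsum j k) = (-(π:ℂ) * j) • Nsum (j-1) k := by
  cases j with
  | zero =>
    simp [Nsum, dzb_X_pow]
  | succ m =>
    rw [Nsum, map_sum, Finset.sum_range_succ]
    have hlast : Dzb ((((m+1).choose (m+1) : ℂ)) •
        ((C (-(π:ℂ)) * X 1)^(m+1-(m+1)) * (((k.descFactorial (m+1) : ℂ)) • (X 0:P2) ^ (k - (m+1))))) = 0 := by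
      rw [map_smul, dzb_mul, dzb_zb_pow]
      simp [dzb_X_pow]
    rw [hlast, add_zero, Nat.succ_sub_one, Nsum, Finset.smul_sum]
    refine Finset.sum_congr rfl fun l hl => ?_
    rw [Finset.mem_range] at hl
    rw [map_smul, dzb_mul, dzb_zb_pow, map_smul, dzb_X_pow, smul_zero, mul_zero, add_zero,
      show m + 1 - l - 1 = m - l by omega]
    simp only [smul_mul_assoc, mul_smul_comm, smul_smul]
    congr 1
    have h2 : ((m + 1 - l : ℕ) : ℂ) * ((m+1).choose l : ℂ) = ((m:ℂ)+1) * (m.choose l : ℂ) := by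
      exact_mod_cast congrArg (Nat.cast (R := ℂ)) (nat_choose m l)
    push_cast at h2 ⊢
    linear_combination (-(π:ℂ) * (k.descFactorial l : ℂ)) * h2

lemma key1r (m : ℕ) : √(π^(m+1)/(m+1).factorial) * ((m:ℝ)+1)
    = √π * √((m:ℝ)+1) * √(π^m/m.factorial) := by
  have h1 : (π^(m+1)/((m+1).factorial:ℝ)) * ((m:ℝ)+1)^2
      = π * (((m:ℝ)+1) * (π^m/m.factorial)) := by
    have h2 : ((m+1).factorial : ℝ) = ((m:ℝ)+1) * m.factorial := by
      push_cast [Nat.factorial_succ]; ring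
    have h3 : (m.factorial : ℝ) ≠ 0 := by positivity
    rw [h2, pow_succ]
    field_simp
  calc √(π^(m+1)/(m+1).factorial) * ((m:ℝ)+1)
      = √((π^(m+1)/(m+1).factorial) * ((m:ℝ)+1)^2) := by
        rw [Real.sqrt_mul (by positivity), Real.sqrt_sq (by positivity)]
    _ = √(π * (((m:ℝ)+1) * (π^m/m.factorial))) := by rw [h1]
    _ = √π * √((m:ℝ)+1) * √(π^m/m.factorial) := by
        rw [Real.sqrt_mul Real.pi_pos.le, Real.sqrt_mul (by positivity), mul_assoc]

lemma key2r (m : ℕ) : √(π^(m+1) * (m+1).factorial)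
    = √π * √((m:ℝ)+1) * √(π^m * m.factorial) := by
  have h1 : (π^(m+1) * ((m+1).factorial:ℝ)) = π * (((m:ℝ)+1) * (π^m * m.factorial)) := by
    push_cast [Nat.factorial_succ, pow_succ]; ring
  rw [h1, Real.sqrt_mul Real.pi_pos.le, Real.sqrt_mul (by positivity), mul_assoc]

end

/-- Lowering relations:
`(1/√π) ∂_z Φ_{j,k} = √k Φ_{j,k-1}` and `(1/√π) ∂_z̄ Φ_{j,k} = -√j Φ_{j-1,k}`,
with the convention `Φ_{j,-1} = Φ_{-1,k} = 0` (the coefficients `√0 = 0` make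
the truncated subtraction on `ℕ` harmless). -/
theorem phiJK_lowering (j k : ℕ) :
    ((Real.sqrt π : ℂ))⁻¹ • Dz (PhiJK j k) = (Real.sqrt k : ℂ) • PhiJK j (k - 1) ∧
    ((Real.sqrt π : ℂ))⁻¹ • Dzb (PhiJK j k) = -((Real.sqrt j : ℂ)) • PhiJK (j - 1) k := by
  have hπ : Real.sqrt π ≠ 0 := ne_of_gt (Real.sqrt_pos.mpr Real.pi_pos)
  constructor
  · rw [phi_eq, phi_eq, map_smul, map_smul, dz_Nsum]
    rw [smul_smul, smul_smul, smul_smul, smul_smul, smul_smul]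
    congr 1
    cases k with
    | zero => simp
    | succ m =>
      have h := congrArg (Complex.ofReal) (key1r m)
      have hπc : ((Real.sqrt π : ℝ) : ℂ) ≠ 0 := by exact_mod_cast hπ
      push_cast at h ⊢
      rw [mul_assoc, h]
      have hcan : ((Real.sqrt π : ℝ):ℂ) * (((Real.sqrt π : ℝ):ℂ))⁻¹ = 1 := mul_inv_cancel₀ hπc
      linear_combination ((Real.sqrt ((m:ℝ)+1) : ℂ) *
        (((Real.sqrt (π^j * j.factorial) : ℝ):ℂ))⁻¹ *
        ((Real.sqrt (π^m / m.factorial) : ℝ):ℂ)) * hcan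
  · rw [phi_eq, phi_eq, map_smul, map_smul, dzb_Nsum]
    rw [smul_smul, smul_smul, smul_smul, smul_smul, smul_smul]
    congr 1
    cases j with
    | zero => simp
    | succ m =>
      have h := congrArg (Complex.ofReal) (key2r m)
      push_cast at h ⊢
      have hm : ((Real.sqrt ((m:ℝ)+1)) : ℂ) ≠ 0 := by
        norm_cast
        exact ne_of_gt (Real.sqrt_pos.mpr (by positivity))
      have hsq : ((Real.sqrt ((m:ℝ)+1)) : ℂ) * ((Real.sqrt ((m:ℝ)+1)) : ℂ) = ((m:ℂ)+1) := by
        norm_cast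
        rw [Real.mul_self_sqrt (by positivity)]
      have hpsq : ((Real.sqrt π : ℂ)) * ((Real.sqrt π : ℂ)) = (π : ℂ) := by
        norm_cast
        exact Real.mul_self_sqrt Real.pi_pos.le
      rw [h]
      have hA : ((Real.sqrt (π ^ m * m.factorial) : ℝ) : ℂ) ≠ 0 := by
        norm_cast
        exact ne_of_gt (Real.sqrt_pos.mpr (by positivity))
      have hπc : ((Real.sqrt π : ℝ) : ℂ) ≠ 0 := by exact_mod_cast hπ
      rw [mul_inv, mul_inv, ← hpsq, ← hsq]
      have hcan : ((Real.sqrt π : ℝ):ℂ) * (((Real.sqrt π : ℝ):ℂ))⁻¹ = 1 := mul_inv_cancel₀ hπc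
      have hcanm : ((Real.sqrt ((m:ℝ)+1) : ℝ):ℂ) * (((Real.sqrt ((m:ℝ)+1) : ℝ):ℂ))⁻¹ = 1 :=
        mul_inv_cancel₀ hm
      linear_combination (-(((Real.sqrt ((m:ℝ)+1) : ℝ):ℂ) * (((Real.sqrt (π^m * m.factorial) : ℝ):ℂ))⁻¹ *
          ((Real.sqrt (π^k / k.factorial) : ℝ):ℂ) *
          (((Real.sqrt π : ℝ):ℂ) * (((Real.sqrt π : ℝ):ℂ))⁻¹)^2)) * hcanm +
        (-(((Real.sqrt ((m:ℝ)+1) : ℝ):ℂ) * (((Real.sqrt (π^m * m.factorial) : ℝ):ℂ))⁻¹ *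
          ((Real.sqrt (π^k / k.factorial) : ℝ):ℂ) *
          (((Real.sqrt π : ℝ):ℂ) * (((Real.sqrt π : ℝ):ℂ))⁻¹ + 1))) * hcan
end

section
/- The magnetic Laplacian L = z̄ ∂_{z̄} − (1/(4π)) Δ_z satisfies L Φ_{j,k} = j · Φ_{j,k} for all j, k ∈ ℕ₀, i.e., the polynomials Φ_{j,k} are eigenfunctions of L with eigenvalue j. -/
open MvPolynomial Real

noncomputable section AuxiliaryLemmas

/-- The basic monomial block `(-π z̄)^m z^n`. -/
noncomputable def Tmn (m n : ℕ) : P2 := (C (-(π : ℂ)) * X 1) ^ m * X 0 ^ n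

lemma Dz_T (m n : ℕ) : Dz (Tmn m n) = (n : ℂ) • Tmn m (n - 1) := by
  show pderiv 0 _ = _
  rw [Tmn, pderiv_mul, pderiv_pow, pderiv_mul, pderiv_C, pderiv_X_of_ne (by decide),
    pderiv_pow, pderiv_X_self, smul_eq_C_mul, Tmn]
  simp only [← C_eq_coe_nat]
  ring

lemma Dzb_T (m n : ℕ) : Dzb (Tmn m n) = ((m : ℂ) * (-(π : ℂ))) • Tmn (m - 1) n := by
  show pderiv 1 _ = _
  rw [Tmn, pderiv_mul, pderiv_pow, pderiv_mul, pderiv_C, pderiv_X_self,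
    pderiv_pow, pderiv_X_of_ne (by decide), smul_eq_C_mul, Tmn]
  simp only [← C_eq_coe_nat, C_mul, C_neg]
  ring

lemma L_T (m n : ℕ) :
    (mulZb ∘ₗ Dzb - (4 * (π : ℂ))⁻¹ • Δz) (Tmn m n)
      = (m : ℂ) • Tmn m n + ((m : ℂ) * (n : ℂ)) • Tmn (m - 1) (n - 1) := by
  have hπ : (π : ℂ) ≠ 0 := by exact_mod_cast Real.pi_ne_zero
  simp only [LinearMap.sub_apply, LinearMap.comp_apply, LinearMap.smul_apply, Δz,
    Dzb_T, Dz_T, map_smul, mulZb, LinearMap.mulLeft_apply, smul_smul]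
  cases m with
  | zero => simp
  | succ m =>
    have h1 : ((((m+1:ℕ) : ℂ)) * -(π:ℂ)) • ((X 1 : P2) * Tmn (m + 1 - 1) n)
        = ((m+1:ℕ) : ℂ) • Tmn (m+1) n := by
      rw [Nat.add_sub_cancel, Tmn, Tmn, smul_eq_C_mul, smul_eq_C_mul, pow_succ, C_mul, C_neg]
      push_cast
      ring
    rw [h1]
    have h2 : ((4 * (π:ℂ))⁻¹ * 4 * ((n:ℂ) * (((m+1:ℕ):ℂ) * -(π:ℂ))))
        = -(((m+1:ℕ):ℂ) * n) := by
      field_simp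
    rw [h2, neg_smul, sub_neg_eq_add]

lemma Dz_pow_apply (c : ℂ) (k l : ℕ) :
    (Dz ^ l) (c • (X 0 : P2) ^ k) = (c * (k.descFactorial l : ℂ)) • X 0 ^ (k - l) := by
  induction l with
  | zero => simp
  | succ l ih =>
    rw [pow_succ', Module.End.mul_apply, ih, map_smul]
    have hX : Dz ((X 0 : P2) ^ (k - l)) = ((k - l : ℕ) : ℂ) • (X 0 : P2) ^ (k - l - 1) := by
      show pderiv 0 _ = _
      rw [pderiv_pow, pderiv_X_self, mul_one, smul_eq_C_mul, C_eq_coe_nat]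
    rw [hX, smul_smul, Nat.sub_sub,
      show c * (k.descFactorial l : ℂ) * ((k - l : ℕ) : ℂ)
          = c * (k.descFactorial (l + 1) : ℂ) by
        rw [Nat.descFactorial_succ]; push_cast; ring]

noncomputable def Gaux (j k : ℕ) (ck : ℂ) (l : ℕ) : P2 :=
  ((j.choose l : ℂ) * (l : ℂ) * (ck * (k.descFactorial l : ℂ))) • Tmn (j - l) (k - l)

lemma Gaux_shift (j k : ℕ) (ck : ℂ) :
    ∑ l ∈ Finset.range (j + 1), Gaux j k ck (l + 1)
      = ∑ l ∈ Finset.range (j + 1), Gaux j k ck l := by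
  have h0 : Gaux j k ck 0 = 0 := by simp [Gaux]
  have hj : Gaux j k ck (j + 1) = 0 := by simp [Gaux, Nat.choose_succ_self]
  have h := Finset.sum_range_succ' (Gaux j k ck) (j + 1)
  rw [Finset.sum_range_succ (Gaux j k ck) (j + 1)] at h
  simpa [h0, hj] using h.symm

lemma step_eq (j k l : ℕ) (ck : ℂ) (hl : l ≤ j) :
    ((j.choose l : ℂ) * (ck * (k.descFactorial l : ℂ))) •
        (((j - l : ℕ) : ℂ) • Tmn (j - l) (k - l)
          + (((j - l : ℕ) : ℂ) * ((k - l : ℕ) : ℂ)) • Tmn (j - l - 1) (k - l - 1))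
      = (j : ℂ) • (((j.choose l : ℂ) * (ck * (k.descFactorial l : ℂ))) • Tmn (j - l) (k - l))
          - Gaux j k ck l + Gaux j k ck (l + 1) := by
  have hc : (j.choose (l + 1) : ℂ) * ((l + 1 : ℕ) : ℂ)
      = (j.choose l : ℂ) * ((j - l : ℕ) : ℂ) := by
    exact_mod_cast congrArg (Nat.cast : ℕ → ℂ) (Nat.choose_succ_right_eq j l)
  have hd : ((k.descFactorial (l + 1) : ℕ) : ℂ)
      = ((k - l : ℕ) : ℂ) * (k.descFactorial l : ℂ) := by
    exact_mod_cast congrArg (Nat.cast : ℕ → ℂ) (Nat.descFactorial_succ k l)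
  have hj : ((j - l : ℕ) : ℂ) = (j : ℂ) - (l : ℂ) := by
    push_cast [Nat.cast_sub hl]; ring
  rw [Gaux, Gaux, show j - (l + 1) = j - l - 1 from (Nat.sub_sub j l 1).symm,
    show k - (l + 1) = k - l - 1 from (Nat.sub_sub k l 1).symm]
  match_scalars
  · rw [hj]; ring
  · rw [hd]
    push_cast at hc ⊢
    linear_combination (-(ck * (k.descFactorial l : ℂ) * ((k - l : ℕ) : ℂ))) * hc

end AuxiliaryLemmas

/-- The magnetic Laplacian `L = z̄ ∂_z̄ - (1/(4π)) Δ_z` satisfies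
`L Φ_{j,k} = j Φ_{j,k}`. -/
theorem phiJK_eigenfunction (j k : ℕ) :
    (mulZb ∘ₗ Dzb - (4 * (π : ℂ))⁻¹ • Δz) (PhiJK j k) = (j : ℂ) • PhiJK j k := by
  set ck : ℂ := (Real.sqrt (π ^ k / k.factorial) : ℂ) with hck
  set c0 : ℂ := ((Real.sqrt (π ^ j * j.factorial) : ℂ))⁻¹ with hc0
  have hPhi : PhiJK j k = c0 • ∑ l ∈ Finset.range (j + 1),
      ((j.choose l : ℂ) * (ck * (k.descFactorial l : ℂ))) • Tmn (j - l) (k - l) := by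
    rw [PhiJK]
    congr 1
    refine Finset.sum_congr rfl fun l _ => ?_
    rw [Dz_pow_apply, Tmn, mul_smul_comm, smul_smul]
  rw [hPhi, map_smul, map_sum]
  simp only [map_smul, L_T]
  rw [smul_comm (j : ℂ) c0]
  congr 1
  rw [Finset.smul_sum]
  calc ∑ l ∈ Finset.range (j + 1),
        ((j.choose l : ℂ) * (ck * (k.descFactorial l : ℂ))) •
          (((j - l : ℕ) : ℂ) • Tmn (j - l) (k - l)
            + (((j - l : ℕ) : ℂ) * ((k - l : ℕ) : ℂ)) • Tmn (j - l - 1) (k - l - 1))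
      = ∑ l ∈ Finset.range (j + 1),
          ((j : ℂ) • (((j.choose l : ℂ) * (ck * (k.descFactorial l : ℂ))) • Tmn (j - l) (k - l))
            - Gaux j k ck l + Gaux j k ck (l + 1)) := by
        refine Finset.sum_congr rfl fun l hl => ?_
        exact step_eq j k l ck (Nat.lt_succ_iff.mp (Finset.mem_range.mp hl))
    _ = ∑ l ∈ Finset.range (j + 1),
          (j : ℂ) • (((j.choose l : ℂ) * (ck * (k.descFactorial l : ℂ))) • Tmn (j - l) (k - l)) := by
        rw [Finset.sum_add_distrib, Finset.sum_sub_distrib, Gaux_shift]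
        abel
end
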